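/- The fundamental Demazure atoms {Ã_α}, indexed by weak compositions α, form a basis of the polynomial ring ℂ[x_1,...,x_n]. -/

import Mathlib

open MvPolynomial
open scoped Classical

open scoped Classical in
/-- The fundamental shift of a weak composition `v`: working right to left, any
positive entry `a` of `v` with a `0` immediately to its left is reduced to `1`,
and the remaining `a − 1` is shifted left so as to sit immediately to the right
of the next nonzero entry to its left (or into position `1` if there is none);
positive entries with a nonzero entry immediately to the left are unchanged,
and all other entries are `0`. -/
noncomputable def qshift (n : ℕ) (v : Fin n → ℕ) : Fin n → ℕ := fun p =>
  if v p ≠ 0 then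
    (if (p : ℕ) = 0 ∨ v ⟨(p : ℕ) - 1, by omega⟩ ≠ 0 then v p else 1)
  else
    if (p : ℕ) = 0 ∨ v ⟨(p : ℕ) - 1, by omega⟩ ≠ 0 then
      (if h : (Finset.univ.filter fun q : Fin n => p < q ∧ v q ≠ 0).Nonempty then
        v ((Finset.univ.filter fun q : Fin n => p < q ∧ v q ≠ 0).min' h) - 1
      else 0)
    else 0

/-- Dominance order on weak compositions of length `n`: `Dom n β γ` means every
partial sum of `β` is at most the corresponding partial sum of `γ`
(i.e. `β ⊴ γ`). -/
def Dom (n : ℕ) (β γ : Fin n → ℕ) : Prop :=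
  ∀ j : Fin n, ∑ p ∈ Finset.univ.filter (· ≤ j), β p
    ≤ ∑ p ∈ Finset.univ.filter (· ≤ j), γ p

/-- The fundamental Demazure atom (fundamental particle) of a weak composition
`α`: `Ã_α = Σ_{α ⊴ β ⊴ qshift(α)} x^β`.  Every such `β` has entries at most
`Σ α`, so the sum may be taken over functions `Fin n → Fin (Σ α + 1)`. -/
noncomputable def AtomP (n : ℕ) (α : Fin n → ℕ) : MvPolynomial (Fin n) ℂ :=
  ∑ c : Fin n → Fin ((∑ p, α p) + 1),
    if Dom n α (fun p => (c p : ℕ)) ∧ Dom n (fun p => (c p : ℕ)) (qshift n α) then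
      monomial (Finsupp.equivFunOnFinite.symm fun p => (c p : ℕ)) (1 : ℂ)
    else 0

namespace FAB

variable {n : ℕ}

/-- `good v p`: `p` is position `0` or the entry immediately to its left is nonzero. -/
def good (v : Fin n → ℕ) (p : Fin n) : Prop :=
  ∀ r : Fin n, (r : ℕ) + 1 = (p : ℕ) → v r ≠ 0

lemma good_iff (v : Fin n → ℕ) (p : Fin n) :
    ((p : ℕ) = 0 ∨ v ⟨(p : ℕ) - 1, by omega⟩ ≠ 0) ↔ good v p := by
  constructor
  · rintro (h | h) r hr
    · omega
    · obtain ⟨rv, hrv⟩ := r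
      simp only at hr
      have hrv' : rv = (p : ℕ) - 1 := by omega
      subst hrv'
      exact h
  · intro h
    by_cases hp : (p : ℕ) = 0
    · exact Or.inl hp
    · exact Or.inr (h ⟨(p : ℕ) - 1, by omega⟩ (by simp; omega))

def Rset (v : Fin n → ℕ) (p : Fin n) : Finset (Fin n) :=
  Finset.univ.filter fun q : Fin n => p < q ∧ v q ≠ 0

lemma mem_Rset {v : Fin n → ℕ} {p q : Fin n} : q ∈ Rset v p ↔ p < q ∧ v q ≠ 0 := by
  simp [Rset]

noncomputable def nxt (v : Fin n → ℕ) (p : Fin n) : Fin n :=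
  if h : (Rset v p).Nonempty then (Rset v p).min' h else p

def Lset (v : Fin n → ℕ) (q : Fin n) : Finset (Fin n) :=
  Finset.univ.filter fun r : Fin n => r < q ∧ v r ≠ 0

lemma mem_Lset {v : Fin n → ℕ} {q r : Fin n} : r ∈ Lset v q ↔ r < q ∧ v r ≠ 0 := by
  simp [Lset]

noncomputable def prv (v : Fin n → ℕ) (q : Fin n) : Fin n :=
  if h : (Lset v q).Nonempty then
    ⟨(((Lset v q).max' h : Fin n) : ℕ) + 1, by
      have h1 := Finset.max'_mem _ h
      rw [mem_Lset] at h1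
      have h2 := Fin.lt_def.mp h1.1
      have := q.isLt
      omega⟩
  else ⟨0, q.pos⟩

/-- canonical form of qshift -/
lemma qshift_eq (v : Fin n → ℕ) (p : Fin n) :
    qshift n v p = if v p ≠ 0 then (if good v p then v p else 1)
      else if good v p ∧ (Rset v p).Nonempty then v (nxt v p) - 1 else 0 := by
  rw [qshift]
  simp only [good_iff, Rset, nxt]
  by_cases h0 : v p ≠ 0 <;> by_cases hg : good v p <;>
    by_cases hne : (Finset.univ.filter fun q : Fin n => p < q ∧ v q ≠ 0).Nonempty <;>
    simp [h0, hg, hne]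

lemma nxt_spec {v : Fin n → ℕ} {p : Fin n} (h : (Rset v p).Nonempty) :
    p < nxt v p ∧ v (nxt v p) ≠ 0 := by
  rw [nxt, dif_pos h]
  exact mem_Rset.mp (Finset.min'_mem _ h)

lemma nxt_le {v : Fin n → ℕ} {p q : Fin n} (h : (Rset v p).Nonempty)
    (hq : q ∈ Rset v p) : nxt v p ≤ q := by
  rw [nxt, dif_pos h]
  exact Finset.min'_le _ _ hq

lemma nxt_zero_between {v : Fin n → ℕ} {p : Fin n} (h : (Rset v p).Nonempty)
    (hp0 : v p = 0) {r : Fin n} (hr1 : p ≤ r) (hr2 : r < nxt v p) : v r = 0 := by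
  rcases eq_or_lt_of_le hr1 with rfl | hlt
  · exact hp0
  · by_contra hr
    exact absurd (nxt_le h (mem_Rset.mpr ⟨hlt, hr⟩)) (not_le.mpr hr2)

lemma not_good_nxt {v : Fin n → ℕ} {p : Fin n} (hp0 : v p = 0)
    (h : (Rset v p).Nonempty) : ¬ good v (nxt v p) := by
  obtain ⟨hlt, _⟩ := nxt_spec (v := v) (p := p) h
  have hlt' := Fin.lt_def.mp hlt
  intro hg
  have hnn : ((nxt v p : ℕ)) - 1 < n := by have := (nxt v p).isLt; omega
  have := hg ⟨(nxt v p : ℕ) - 1, hnn⟩ (by simp; omega)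
  have hz : v ⟨(nxt v p : ℕ) - 1, hnn⟩ = 0 := by
    apply nxt_zero_between h hp0
    · rw [Fin.le_def]; simp; omega
    · rw [Fin.lt_def]; simp; omega
  exact this hz

lemma prv_spec {v : Fin n → ℕ} {q : Fin n} (hq : v q ≠ 0) (hgq : ¬ good v q) :
    prv v q < q ∧ v (prv v q) = 0 ∧ good v (prv v q) ∧ q ∈ Rset v (prv v q) := by
  rw [good] at hgq
  push_neg at hgq
  obtain ⟨r0, hr0, hvr0⟩ := hgq
  by_cases h : (Lset v q).Nonempty
  · set M := (Lset v q).max' h with hM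
    have hMm := Finset.max'_mem _ h
    rw [mem_Lset] at hMm
    have hMq := Fin.lt_def.mp hMm.1
    have hprv : prv v q = ⟨(M : ℕ) + 1, by have := q.isLt; omega⟩ := by
      rw [prv, dif_pos h]
    have hne : (M : ℕ) + 1 ≠ (q : ℕ) := by
      intro hc
      have : r0 = M := by
        apply Fin.ext; omega
      rw [this] at hvr0
      exact hMm.2 hvr0
    have hlt : prv v q < q := by rw [hprv, Fin.lt_def]; simp; omega
    have hvz : v (prv v q) = 0 := by
      by_contra hvp
      have : prv v q ∈ Lset v q := mem_Lset.mpr ⟨hlt, hvp⟩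
      have := Finset.le_max' _ _ this
      rw [← hM] at this
      have := Fin.le_def.mp this
      rw [hprv] at this
      simp at this
    refine ⟨hlt, hvz, ?_, ?_⟩
    · intro r hr
      have : r = M := by apply Fin.ext; rw [hprv] at hr; simp at hr; omega
      rw [this]; exact hMm.2
    · rw [mem_Rset]
      exact ⟨hlt, hq⟩
  · have hprv : prv v q = ⟨0, q.pos⟩ := by rw [prv, dif_neg h]
    have hq0 : (q : ℕ) ≠ 0 := by
      intro hc; omega
    have hlt : prv v q < q := by rw [hprv, Fin.lt_def]; simp; omega
    have hvz : v (prv v q) = 0 := by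
      by_contra hvp
      exact h ⟨prv v q, mem_Lset.mpr ⟨hlt, hvp⟩⟩
    refine ⟨hlt, hvz, ?_, mem_Rset.mpr ⟨hlt, hq⟩⟩
    · intro r hr
      rw [hprv] at hr
      simp at hr
lemma nxt_prv {v : Fin n → ℕ} {q : Fin n} (hq : v q ≠ 0) (hgq : ¬ good v q) :
    nxt v (prv v q) = q := by
  obtain ⟨hlt, hvz, hgp, hmem⟩ := prv_spec hq hgq
  have hne : (Rset v (prv v q)).Nonempty := ⟨q, hmem⟩
  apply le_antisymm (nxt_le hne hmem)
  by_contra hc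
  push_neg at hc
  obtain ⟨hlt2, hnz⟩ := nxt_spec hne
  have hmem2 : nxt v (prv v q) ∈ Lset v q := mem_Lset.mpr ⟨hc, hnz⟩
  have hLne : (Lset v q).Nonempty := ⟨_, hmem2⟩
  have hle := Fin.le_def.mp (Finset.le_max' _ _ hmem2)
  have h2 := Fin.lt_def.mp hlt2
  have h3 : (prv v q : ℕ) = (((Lset v q).max' hLne : Fin n) : ℕ) + 1 := by
    rw [prv, dif_pos hLne]
  omega

lemma prv_nxt {v : Fin n → ℕ} {p : Fin n} (hp0 : v p = 0) (hgp : good v p)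
    (h : (Rset v p).Nonempty) : prv v (nxt v p) = p := by
  obtain ⟨hlt, hnz⟩ := nxt_spec (v := v) (p := p) h
  by_cases hp' : (p : ℕ) = 0
  · have hLe : ¬ (Lset v (nxt v p)).Nonempty := by
      rintro ⟨r, hr⟩
      rw [mem_Lset] at hr
      have : v r = 0 := nxt_zero_between h hp0 (by rw [Fin.le_def]; omega) hr.1
      exact hr.2 this
    rw [prv, dif_neg hLe]
    apply Fin.ext
    simp; omega
  · have hnn : (p : ℕ) - 1 < n := by have := p.isLt; omega
    have hvp1 : v ⟨(p : ℕ) - 1, hnn⟩ ≠ 0 := hgp ⟨(p : ℕ) - 1, hnn⟩ (by simp; omega)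
    have hmem1 : (⟨(p : ℕ) - 1, hnn⟩ : Fin n) ∈ Lset v (nxt v p) := by
      rw [mem_Lset]
      refine ⟨?_, hvp1⟩
      rw [Fin.lt_def]
      have := Fin.lt_def.mp hlt
      simp; omega
    have hLne : (Lset v (nxt v p)).Nonempty := ⟨_, hmem1⟩
    have hmax : (Lset v (nxt v p)).max' hLne = ⟨(p : ℕ) - 1, hnn⟩ := by
      apply le_antisymm _ (Finset.le_max' _ _ hmem1)
      apply Finset.max'_le
      intro r hr
      rw [mem_Lset] at hr
      rw [Fin.le_def]
      simp
      by_contra hcon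
      push_neg at hcon
      have : v r = 0 := nxt_zero_between h hp0 (by rw [Fin.le_def]; omega) hr.1
      exact hr.2 this
    rw [prv, dif_pos hLne]
    apply Fin.ext
    simp [hmax]
    omega


lemma qshift_decomp (v : Fin n → ℕ) (p : Fin n) :
    qshift n v p = (if v p ≠ 0 ∧ good v p then v p else 0)
      + (if v p ≠ 0 ∧ ¬ good v p then 1 else 0)
      + (if v p = 0 ∧ good v p ∧ (Rset v p).Nonempty then v (nxt v p) - 1 else 0) := by
  rw [qshift_eq]
  by_cases h0 : v p = 0 <;> by_cases hg : good v p <;> by_cases hne : (Rset v p).Nonempty <;>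
    simp [h0, hg, hne]

lemma v_decomp (v : Fin n → ℕ) (p : Fin n) :
    v p = (if v p ≠ 0 ∧ good v p then v p else 0)
      + (if v p ≠ 0 ∧ ¬ good v p then v p else 0) := by
  by_cases h0 : v p = 0 <;> by_cases hg : good v p <;> simp [h0, hg]

lemma sum_qshift_decomp (v : Fin n → ℕ) (D : Finset (Fin n)) :
    ∑ p ∈ D, qshift n v p
      = (∑ p ∈ D.filter (fun p => v p ≠ 0 ∧ good v p), v p)
        + (∑ _p ∈ D.filter (fun p => v p ≠ 0 ∧ ¬ good v p), 1)
        + (∑ p ∈ D.filter (fun p => v p = 0 ∧ good v p ∧ (Rset v p).Nonempty), (v (nxt v p) - 1)) := by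
  rw [Finset.sum_filter, Finset.sum_filter, Finset.sum_filter,
    ← Finset.sum_add_distrib, ← Finset.sum_add_distrib]
  exact Finset.sum_congr rfl fun p _ => qshift_decomp v p

lemma sum_v_decomp (v : Fin n → ℕ) (D : Finset (Fin n)) :
    ∑ p ∈ D, v p
      = (∑ p ∈ D.filter (fun p => v p ≠ 0 ∧ good v p), v p)
        + (∑ p ∈ D.filter (fun p => v p ≠ 0 ∧ ¬ good v p), v p) := by
  rw [Finset.sum_filter, Finset.sum_filter, ← Finset.sum_add_distrib]
  exact Finset.sum_congr rfl fun p _ => v_decomp v p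

lemma sum_CB (v : Fin n → ℕ) (P : Fin n → Prop) :
    ∑ p ∈ Finset.univ.filter (fun p => v p = 0 ∧ good v p ∧ (Rset v p).Nonempty ∧ P (nxt v p)),
        (v (nxt v p) - 1)
      = ∑ q ∈ Finset.univ.filter (fun q => v q ≠ 0 ∧ ¬ good v q ∧ P q), (v q - 1) := by
  apply Finset.sum_nbij' (i := nxt v) (j := prv v)
  · intro p hp
    simp only [Finset.mem_filter, Finset.mem_univ, true_and] at hp ⊢
    obtain ⟨h0, hg, hne, hP⟩ := hp
    exact ⟨(nxt_spec hne).2, not_good_nxt h0 hne, hP⟩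
  · intro q hq
    simp only [Finset.mem_filter, Finset.mem_univ, true_and] at hq ⊢
    obtain ⟨h0, hg, hP⟩ := hq
    obtain ⟨hlt, hz, hgood, hmem⟩ := prv_spec h0 hg
    refine ⟨hz, hgood, ⟨q, hmem⟩, ?_⟩
    rw [nxt_prv h0 hg]
    exact hP
  · intro p hp
    simp only [Finset.mem_filter, Finset.mem_univ, true_and] at hp
    exact prv_nxt hp.1 hp.2.1 hp.2.2.1
  · intro q hq
    simp only [Finset.mem_filter, Finset.mem_univ, true_and] at hq
    exact nxt_prv hq.1 hq.2.1
  · intro p _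
    rfl

/-- total sum of qshift equals total sum -/
lemma sum_qshift (v : Fin n → ℕ) : ∑ p, qshift n v p = ∑ p, v p := by
  have h1 := sum_qshift_decomp v Finset.univ
  have h2 := sum_v_decomp v Finset.univ
  have h3 := sum_CB v (fun _ => True)
  simp only [and_true] at h3
  rw [h1, h3, h2]
  have : (∑ _p ∈ Finset.univ.filter (fun p => v p ≠ 0 ∧ ¬ good v p), 1)
        + (∑ q ∈ Finset.univ.filter (fun q => v q ≠ 0 ∧ ¬ good v q), (v q - 1))
      = ∑ q ∈ Finset.univ.filter (fun q => v q ≠ 0 ∧ ¬ good v q), v q := by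
    rw [← Finset.sum_add_distrib]
    apply Finset.sum_congr rfl
    intro q hq
    simp only [Finset.mem_filter] at hq
    have := hq.2.1
    omega
  omega

/-- partial sums of qshift dominate partial sums -/
lemma dom_qshift (v : Fin n → ℕ) : Dom n v (qshift n v) := by
  intro j
  set D := Finset.univ.filter (· ≤ j) with hD
  have h1 := sum_qshift_decomp v D
  have h2 := sum_v_decomp v D
  have h3 : ∑ p ∈ Finset.univ.filter
        (fun p => v p = 0 ∧ good v p ∧ (Rset v p).Nonempty ∧ nxt v p ≤ j), (v (nxt v p) - 1)
      = ∑ q ∈ D.filter (fun q => v q ≠ 0 ∧ ¬ good v q), (v q - 1) := by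
    apply Finset.sum_nbij' (i := nxt v) (j := prv v)
    · intro p hp
      simp only [Finset.mem_filter, Finset.mem_univ, true_and] at hp
      obtain ⟨h0, hg, hne, hP⟩ := hp
      rw [Finset.mem_filter, hD, Finset.mem_filter]
      exact ⟨⟨Finset.mem_univ _, hP⟩, (nxt_spec hne).2, not_good_nxt h0 hne⟩
    · intro q hq
      rw [Finset.mem_filter, hD, Finset.mem_filter] at hq
      obtain ⟨⟨_, hPq⟩, h0, hg⟩ := hq
      simp only [Finset.mem_filter, Finset.mem_univ, true_and]
      obtain ⟨hlt, hz, hgood, hmem⟩ := prv_spec h0 hg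
      refine ⟨hz, hgood, ⟨q, hmem⟩, ?_⟩
      rw [nxt_prv h0 hg]
      exact hPq
    · intro p hp
      simp only [Finset.mem_filter, Finset.mem_univ, true_and] at hp
      exact prv_nxt hp.1 hp.2.1 hp.2.2.1
    · intro q hq
      rw [Finset.mem_filter] at hq
      exact nxt_prv hq.2.1 hq.2.2
    · intro p _
      rfl
  have hC : Finset.univ.filter (fun p => v p = 0 ∧ good v p ∧ (Rset v p).Nonempty ∧ nxt v p ≤ j)
      ⊆ D.filter (fun p => v p = 0 ∧ good v p ∧ (Rset v p).Nonempty) := by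
    intro p hp
    simp only [Finset.mem_filter, Finset.mem_univ, true_and] at hp
    rw [hD, Finset.mem_filter, Finset.mem_filter]
    refine ⟨⟨Finset.mem_univ _, ?_⟩, hp.1, hp.2.1, hp.2.2.1⟩
    exact le_of_lt (lt_of_lt_of_le (nxt_spec hp.2.2.1).1 hp.2.2.2)
  have h4 : (∑ p ∈ Finset.univ.filter (fun p => v p = 0 ∧ good v p ∧ (Rset v p).Nonempty ∧ nxt v p ≤ j), (v (nxt v p) - 1))
      ≤ ∑ p ∈ D.filter (fun p => v p = 0 ∧ good v p ∧ (Rset v p).Nonempty), (v (nxt v p) - 1) :=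
    Finset.sum_le_sum_of_subset hC
  have h5 : (∑ _p ∈ D.filter (fun p => v p ≠ 0 ∧ ¬ good v p), 1)
        + (∑ q ∈ D.filter (fun q => v q ≠ 0 ∧ ¬ good v q), (v q - 1))
      = ∑ q ∈ D.filter (fun q => v q ≠ 0 ∧ ¬ good v q), v q := by
    rw [← Finset.sum_add_distrib]
    apply Finset.sum_congr rfl
    intro q hq
    simp only [Finset.mem_filter] at hq
    have := hq.2.1
    omega
  omega


lemma dom_refl (α : Fin n → ℕ) : Dom n α α := fun _ => le_rfl

lemma filter_le_last (j : Fin n) (hj : (j : ℕ) = n - 1) :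
    Finset.univ.filter (· ≤ j) = (Finset.univ : Finset (Fin n)) := by
  ext p
  simp only [Finset.mem_filter, Finset.mem_univ, true_and, iff_true, Fin.le_def]
  have := p.isLt
  omega

lemma sum_le_split (v : Fin n → ℕ) (j : Fin n) :
    ∑ p ∈ Finset.univ.filter (· ≤ j), v p
      = (∑ p ∈ Finset.univ.filter (· < j), v p) + v j := by
  have he : Finset.univ.filter (· ≤ j) = insert j (Finset.univ.filter (· < j)) := by
    ext p
    simp only [Finset.mem_filter, Finset.mem_univ, true_and, Finset.mem_insert]
    rw [le_iff_lt_or_eq]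
    tauto
  rw [he, Finset.sum_insert (by simp)]
  exact Nat.add_comm _ _

lemma dom_antisymm {β γ : Fin n → ℕ} (h1 : Dom n β γ) (h2 : Dom n γ β) : β = γ := by
  have key : ∀ m : ℕ, ∀ j : Fin n, (j : ℕ) = m → β j = γ j := by
    intro m
    induction m using Nat.strong_induction_on with
    | _ m ih =>
      intro j hj
      have e : ∑ p ∈ Finset.univ.filter (· < j), β p
          = ∑ p ∈ Finset.univ.filter (· < j), γ p := by
        apply Finset.sum_congr rfl
        intro p hp
        simp only [Finset.mem_filter, Finset.mem_univ, true_and] at hp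
        exact ih (p : ℕ) (by have := Fin.lt_def.mp hp; omega) p rfl
      have hb := h1 j
      have hc := h2 j
      rw [sum_le_split, sum_le_split, e] at hb
      rw [sum_le_split, sum_le_split, e] at hc
      omega
  funext j
  exact key (j : ℕ) j rfl

lemma dom_F_lt {β γ : Fin n → ℕ} (h : Dom n β γ) (hne : β ≠ γ) :
    (∑ j : Fin n, ∑ p ∈ Finset.univ.filter (· ≤ j), β p)
      < ∑ j : Fin n, ∑ p ∈ Finset.univ.filter (· ≤ j), γ p := by
  have hex : ∃ j : Fin n, (∑ p ∈ Finset.univ.filter (· ≤ j), β p)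
      < ∑ p ∈ Finset.univ.filter (· ≤ j), γ p := by
    by_contra hcon
    push_neg at hcon
    exact hne (dom_antisymm h (fun j => hcon j))
  obtain ⟨j, hj⟩ := hex
  exact Finset.sum_lt_sum (fun i _ => h i) ⟨j, Finset.mem_univ j, hj⟩

lemma F_le_bound (v : Fin n → ℕ) :
    (∑ j : Fin n, ∑ p ∈ Finset.univ.filter (· ≤ j), v p) ≤ n * ∑ p, v p := by
  calc (∑ j : Fin n, ∑ p ∈ Finset.univ.filter (· ≤ j), v p)
      ≤ ∑ _j : Fin n, ∑ p, v p :=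
        Finset.sum_le_sum fun j _ =>
          Finset.sum_le_sum_of_subset (Finset.filter_subset _ _)
    _ = n * ∑ p, v p := by
        rw [Finset.sum_const, Finset.card_univ, Fintype.card_fin, smul_eq_mul]

lemma sum_le_of_dom {β γ : Fin n → ℕ} (h : Dom n β γ) (hn : 0 < n) :
    (∑ p, β p) ≤ ∑ p, γ p := by
  have hj := h ⟨n - 1, by omega⟩
  rwa [filter_le_last _ rfl] at hj

lemma coeff_AtomP (α m : Fin n → ℕ) :
    MvPolynomial.coeff (Finsupp.equivFunOnFinite.symm m) (AtomP n α)
      = if (∀ p, m p ≤ ∑ p, α p) ∧ Dom n α m ∧ Dom n m (qshift n α) then 1 else 0 := by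
  rw [AtomP, MvPolynomial.coeff_sum]
  simp only [apply_ite (MvPolynomial.coeff (Finsupp.equivFunOnFinite.symm m)),
    MvPolynomial.coeff_monomial, MvPolynomial.coeff_zero, EmbeddingLike.apply_eq_iff_eq]
  by_cases hm : ∀ p, m p ≤ ∑ p, α p
  · set c0 : Fin n → Fin ((∑ p, α p) + 1) := fun p => ⟨m p, by have := hm p; omega⟩ with hc0
    rw [Finset.sum_eq_single c0]
    · have hfc0 : (fun p => ((c0 p : ℕ))) = m := by funext p; simp [hc0]
      rw [hfc0]
      by_cases hd : Dom n α m ∧ Dom n m (qshift n α) <;> simp [hd, hm]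
    · intro c _ hc
      split_ifs with h1 h2
      · exfalso
        apply hc
        funext p
        exact Fin.ext (by simpa using congrFun h2 p)
      · rfl
      · rfl
    · intro h
      exact absurd (Finset.mem_univ c0) h
  · rw [if_neg (by tauto)]
    apply Finset.sum_eq_zero
    intro c _
    split_ifs with h1 h2
    · exfalso
      apply hm
      intro p
      rw [← congrFun h2 p]
      have := (c p).isLt
      omega
    · rfl
    · rfl

lemma monomial_mem_span (α : Fin n → ℕ) :
    MvPolynomial.monomial (Finsupp.equivFunOnFinite.symm α) (1 : ℂ)
      ∈ Submodule.span ℂ (Set.range (AtomP n)) := by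
  have main : ∀ k : ℕ, ∀ α : Fin n → ℕ,
      n * (∑ p, α p) - (∑ j : Fin n, ∑ p ∈ Finset.univ.filter (· ≤ j), α p) = k →
      MvPolynomial.monomial (Finsupp.equivFunOnFinite.symm α) (1 : ℂ)
        ∈ Submodule.span ℂ (Set.range (AtomP n)) := by
    intro k
    induction k using Nat.strong_induction_on with
    | _ k ih =>
      intro α hk
      have hbound : ∀ p, α p ≤ ∑ q, α q := fun p =>
        Finset.single_le_sum (fun i _ => Nat.zero_le _) (Finset.mem_univ p)
      set c0 : Fin n → Fin ((∑ p, α p) + 1) := fun p => ⟨α p, by have := hbound p; omega⟩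
        with hc0
      have hfc0 : (fun p => ((c0 p : ℕ))) = α := by funext p; simp [hc0]
      have hatom : AtomP n α
          = (∑ c ∈ Finset.univ.erase c0,
              if Dom n α (fun p => ((c p : ℕ))) ∧ Dom n (fun p => ((c p : ℕ))) (qshift n α) then
                MvPolynomial.monomial (Finsupp.equivFunOnFinite.symm fun p => ((c p : ℕ))) (1 : ℂ)
              else 0)
            + MvPolynomial.monomial (Finsupp.equivFunOnFinite.symm α) (1 : ℂ) := by
        rw [AtomP, ← Finset.sum_erase_add _ _ (Finset.mem_univ c0)]
        congr 1
        have hdd : Dom n α (fun p => ((c0 p : ℕ))) ∧ Dom n (fun p => ((c0 p : ℕ))) (qshift n α) := by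
          rw [hfc0]
          exact ⟨dom_refl α, dom_qshift α⟩
        rw [if_pos hdd, hfc0]
      have heq : MvPolynomial.monomial (Finsupp.equivFunOnFinite.symm α) (1 : ℂ)
          = AtomP n α - (∑ c ∈ Finset.univ.erase c0,
              if Dom n α (fun p => ((c p : ℕ))) ∧ Dom n (fun p => ((c p : ℕ))) (qshift n α) then
                MvPolynomial.monomial (Finsupp.equivFunOnFinite.symm fun p => ((c p : ℕ))) (1 : ℂ)
              else 0) := by
        rw [hatom]; ring
      rw [heq]
      apply Submodule.sub_mem
      · exact Submodule.subset_span ⟨α, rfl⟩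
      · apply Submodule.sum_mem
        intro c hc
        split_ifs with hcond
        · -- the exponent β = fun p => ↑(c p) strictly dominates α
          have hcne : c ≠ c0 := (Finset.mem_erase.mp hc).1
          have hn : 0 < n := by
            by_contra hn0
            push_neg at hn0
            interval_cases n
            exact hcne (funext fun p => absurd p.isLt (by omega))
          have hne : (fun p => ((c p : ℕ))) ≠ α := fun hcon =>
            hcne (funext fun p => Fin.ext ((congrFun hcon p).trans (congrFun hfc0 p).symm))
          have hs1 : (∑ p, α p) ≤ ∑ p, ((c p : ℕ)) := sum_le_of_dom hcond.1 hn
          have hs2 : (∑ p, ((c p : ℕ))) ≤ ∑ p, qshift n α p := sum_le_of_dom hcond.2 hn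
          have hs3 : (∑ p, qshift n α p) = ∑ p, α p := sum_qshift α
          have hF : (∑ j : Fin n, ∑ p ∈ Finset.univ.filter (· ≤ j), α p)
              < ∑ j : Fin n, ∑ p ∈ Finset.univ.filter (· ≤ j), ((c p : ℕ)) :=
            dom_F_lt hcond.1 (fun hcon => hne hcon.symm)
          have hFb : (∑ j : Fin n, ∑ p ∈ Finset.univ.filter (· ≤ j), ((c p : ℕ)))
              ≤ n * ∑ p, ((c p : ℕ)) := F_le_bound _
          have hseq : (∑ p, ((c p : ℕ))) = ∑ p, α p := by omega
          have hmul : n * (∑ p, ((c p : ℕ))) = n * ∑ p, α p := by rw [hseq]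
          have hslt : n * (∑ p, ((c p : ℕ)))
              - (∑ j : Fin n, ∑ p ∈ Finset.univ.filter (· ≤ j), ((c p : ℕ))) < k := by
            rw [hmul] at hFb ⊢
            omega
          exact ih _ hslt _ rfl
        · exact Submodule.zero_mem _
  exact main _ α rfl

lemma span_top : ⊤ ≤ Submodule.span ℂ (Set.range (AtomP n)) := by
  rw [← (MvPolynomial.basisMonomials (Fin n) ℂ).span_eq]
  apply Submodule.span_le.mpr
  rintro _ ⟨s, rfl⟩
  have h := monomial_mem_span (n := n) (Finsupp.equivFunOnFinite s)
  rw [Equiv.symm_apply_apply] at h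
  simpa using h

lemma li : LinearIndependent ℂ (AtomP n) := by
  rw [linearIndependent_iff']
  intro s g hsum i hi
  by_contra hgi
  set t := s.filter (fun a => g a ≠ 0) with ht
  have htne : t.Nonempty := ⟨i, by simp [ht, hi, hgi]⟩
  obtain ⟨α, hαt, hmin⟩ := Finset.exists_min_image t
    (fun a => ∑ j : Fin n, ∑ p ∈ Finset.univ.filter (· ≤ j), a p) htne
  have hαs : α ∈ s := (Finset.mem_filter.mp hαt).1
  have hgα : g α ≠ 0 := (Finset.mem_filter.mp hαt).2
  have hbound : ∀ p, α p ≤ ∑ q, α q := fun p =>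
    Finset.single_le_sum (fun i _ => Nat.zero_le _) (Finset.mem_univ p)
  have hco := congrArg (MvPolynomial.coeff (Finsupp.equivFunOnFinite.symm α)) hsum
  simp only [MvPolynomial.coeff_sum, MvPolynomial.coeff_smul, MvPolynomial.coeff_zero,
    smul_eq_mul] at hco
  rw [Finset.sum_eq_single α] at hco
  · rw [coeff_AtomP, if_pos ⟨hbound, dom_refl α, dom_qshift α⟩, mul_one] at hco
    exact hgα hco
  · intro b hb hbne
    rw [coeff_AtomP]
    by_cases hgb : g b = 0
    · simp [hgb]
    · rw [if_neg]
      · simp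
      · rintro ⟨hble, hdom, hdom2⟩
        have hbt : b ∈ t := Finset.mem_filter.mpr ⟨hb, hgb⟩
        have hm := hmin b hbt
        have hlt := dom_F_lt hdom hbne
        omega
  · intro hα
    exact absurd hαs hα

noncomputable def atomBasis : Module.Basis (Fin n → ℕ) ℂ (MvPolynomial (Fin n) ℂ) :=
  Module.Basis.mk li span_top

lemma atomBasis_apply (α : Fin n → ℕ) : atomBasis α = AtomP n α :=
  Module.Basis.mk_apply _ _ _

end FAB


/-- the fundamental Demazure atoms `{Ã_α}`, indexed by weak
compositions `α` of length `n`, form a basis of the polynomial ring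
`ℂ[x₁,…,xₙ]`. -/
theorem fundamental_atoms_basis (n : ℕ) :
    ∃ b : Module.Basis (Fin n → ℕ) ℂ (MvPolynomial (Fin n) ℂ), ∀ α, b α = AtomP n α :=
  ⟨FAB.atomBasis, FAB.atomBasis_apply⟩
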